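/- Let (X, μ) be a measure space, ε > 0, let λ₊, λ₋ ∈ L¹(μ) be nonnegative, let u, u′, v be measurable real-valued functions with λ₊·(u − u′) and λ₋·(u − u′) integrable, and let χ₊, χ₋ be measurable functions such that almost everywhere 0 ≤ χ₊ ≤ 1, χ₊ = 1 on {u > v}, χ₊ = 0 on {u < v}, and 0 ≤ χ₋ ≤ 1, χ₋ = 1 on {u < v}, χ₋ = 0 on {u > v}. Then ∫_X [λ₊·(H_ε(u′ − v) − χ₊) − λ₋·(H_ε(v − u′) − χ₋)]·(u − u′) dμ ≤ ε·(‖λ₊‖_{L¹(μ)} + ‖λ₋‖_{L¹(μ)}). -/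
import Mathlib


open MeasureTheory

/-- The regularized Heaviside function `H_ε`. -/
noncomputable def Heps (ε t : ℝ) : ℝ := max 0 (min (t / ε) 1)

lemma Heps_nonneg (ε t : ℝ) : 0 ≤ Heps ε t := le_max_left _ _

lemma Heps_le_one (ε t : ℝ) : Heps ε t ≤ 1 :=
  max_le zero_le_one (min_le_right _ _)

lemma Heps_of_nonpos {ε t : ℝ} (hε : 0 < ε) (ht : t ≤ 0) : Heps ε t = 0 := by
  unfold Heps
  rw [max_eq_left]
  exact le_trans (min_le_left _ _) (div_nonpos_of_nonpos_of_nonneg ht hε.le)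

lemma Heps_of_ge {ε t : ℝ} (hε : 0 < ε) (ht : ε ≤ t) : Heps ε t = 1 := by
  unfold Heps
  rw [min_eq_right, max_eq_right zero_le_one]
  rw [le_div_iff₀ hε]
  linarith

lemma heps_key {ε u u' v χ : ℝ} (hε : 0 < ε) (hχ0 : 0 ≤ χ) (hχ1 : χ ≤ 1)
    (hgt : u > v → χ = 1) (hlt : u < v → χ = 0) :
    (Heps ε (u' - v) - χ) * (u - u') ≤ ε := by
  have h0 : 0 ≤ Heps ε (u' - v) := Heps_nonneg _ _
  have h1 : Heps ε (u' - v) ≤ 1 := Heps_le_one _ _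
  rcases lt_trichotomy u v with h | h | h
  · rw [hlt h]
    rcases le_or_gt (u' - v) 0 with hs | hs
    · rw [Heps_of_nonpos hε hs]; nlinarith
    · nlinarith [mul_nonneg h0 (show (0:ℝ) ≤ u' - u by linarith)]
  · subst h
    rcases le_or_gt (u' - u) 0 with hs | hs
    · rw [Heps_of_nonpos hε hs]
      nlinarith [mul_nonneg hχ0 (show (0:ℝ) ≤ u - u' by linarith)]
    · rcases le_or_gt ε (u' - u) with he | he
      · rw [Heps_of_ge hε he]
        nlinarith [mul_nonneg (show (0:ℝ) ≤ 1 - χ by linarith) hs.le]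
      · have h2 : (χ - Heps ε (u' - u)) * (u' - u) ≤ 1 * (u' - u) :=
          mul_le_mul_of_nonneg_right (by linarith) hs.le
        nlinarith [h2]
  · rw [hgt h]
    rcases le_or_gt u' u with hle | hlt'
    · nlinarith [mul_nonneg (show (0:ℝ) ≤ 1 - Heps ε (u' - v) by linarith)
        (show (0:ℝ) ≤ u - u' by linarith)]
    · rcases le_or_gt ε (u' - v) with he | he
      · rw [Heps_of_ge hε he]; nlinarith
      · have h2 : (1 - Heps ε (u' - v)) * (u' - u) ≤ 1 * (u' - u) :=
          mul_le_mul_of_nonneg_right (by linarith) (by linarith)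
        nlinarith [h2]

theorem stmt4 {X : Type*} [MeasurableSpace X] (μ : Measure X) (ε : ℝ) (hε : 0 < ε)
    (lp lm u u' v χp χm : X → ℝ)
    (hlp : Integrable lp μ) (hlm : Integrable lm μ)
    (hlp0 : ∀ᵐ x ∂μ, 0 ≤ lp x) (hlm0 : ∀ᵐ x ∂μ, 0 ≤ lm x)
    (hu : Measurable u) (hu' : Measurable u') (hv : Measurable v)
    (hχp : Measurable χp) (hχm : Measurable χm)
    (hint1 : Integrable (fun x => lp x * (u x - u' x)) μ)
    (hint2 : Integrable (fun x => lm x * (u x - u' x)) μ)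
    (hχp01 : ∀ᵐ x ∂μ, 0 ≤ χp x ∧ χp x ≤ 1)
    (hχpgt : ∀ᵐ x ∂μ, u x > v x → χp x = 1)
    (hχplt : ∀ᵐ x ∂μ, u x < v x → χp x = 0)
    (hχm01 : ∀ᵐ x ∂μ, 0 ≤ χm x ∧ χm x ≤ 1)
    (hχmlt : ∀ᵐ x ∂μ, u x < v x → χm x = 1)
    (hχmgt : ∀ᵐ x ∂μ, u x > v x → χm x = 0) :
    ∫ x, (lp x * (Heps ε (u' x - v x) - χp x)
        - lm x * (Heps ε (v x - u' x) - χm x)) * (u x - u' x) ∂μ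
      ≤ ε * ((∫ x, |lp x| ∂μ) + (∫ x, |lm x| ∂μ)) := by
  have hHeps_cont : Continuous (Heps ε) := by
    unfold Heps
    fun_prop
  have hmp : Measurable fun x => Heps ε (u' x - v x) - χp x :=
    (hHeps_cont.measurable.comp (hu'.sub hv)).sub hχp
  have hmm : Measurable fun x => Heps ε (v x - u' x) - χm x :=
    (hHeps_cont.measurable.comp (hv.sub hu')).sub hχm
  have hg1 : Integrable (fun x => (Heps ε (u' x - v x) - χp x) * (lp x * (u x - u' x))) μ := by
    apply hint1.bdd_mul (c := 2) hmp.aestronglyMeasurable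
    filter_upwards [hχp01] with x ⟨h0, h1⟩
    rw [Real.norm_eq_abs, abs_le]
    constructor <;> nlinarith [Heps_nonneg ε (u' x - v x), Heps_le_one ε (u' x - v x)]
  have hg2 : Integrable (fun x => (Heps ε (v x - u' x) - χm x) * (lm x * (u x - u' x))) μ := by
    apply hint2.bdd_mul (c := 2) hmm.aestronglyMeasurable
    filter_upwards [hχm01] with x ⟨h0, h1⟩
    rw [Real.norm_eq_abs, abs_le]
    constructor <;> nlinarith [Heps_nonneg ε (v x - u' x), Heps_le_one ε (v x - u' x)]
  have heq : ∀ x, (lp x * (Heps ε (u' x - v x) - χp x)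
        - lm x * (Heps ε (v x - u' x) - χm x)) * (u x - u' x)
      = (Heps ε (u' x - v x) - χp x) * (lp x * (u x - u' x))
        - (Heps ε (v x - u' x) - χm x) * (lm x * (u x - u' x)) := by
    intro x; ring
  simp_rw [heq]
  have hbound : ∀ᵐ x ∂μ, (Heps ε (u' x - v x) - χp x) * (lp x * (u x - u' x))
        - (Heps ε (v x - u' x) - χm x) * (lm x * (u x - u' x))
      ≤ ε * (|lp x| + |lm x|) := by
    filter_upwards [hlp0, hlm0, hχp01, hχpgt, hχplt, hχm01, hχmlt, hχmgt] with x
      hlp0 hlm0 hχp01 hχpgt hχplt hχm01 hχmlt hχmgt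
    have key1 : (Heps ε (u' x - v x) - χp x) * (u x - u' x) ≤ ε :=
      heps_key hε hχp01.1 hχp01.2 hχpgt hχplt
    have key2 : (Heps ε ((-u' x) - (-v x)) - χm x) * ((-u x) - (-u' x)) ≤ ε :=
      heps_key hε hχm01.1 hχm01.2 (fun h => hχmlt (by linarith)) (fun h => hχmgt (by linarith))
    have e1 : (v x) - (u' x) = (-u' x) - (-v x) := by ring
    rw [abs_of_nonneg hlp0, abs_of_nonneg hlm0]
    have t1 : (Heps ε (u' x - v x) - χp x) * (lp x * (u x - u' x)) ≤ ε * lp x := by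
      have := mul_le_mul_of_nonneg_left key1 hlp0
      nlinarith [this]
    have t2 : -((Heps ε (v x - u' x) - χm x) * (lm x * (u x - u' x))) ≤ ε * lm x := by
      rw [e1] at *
      have := mul_le_mul_of_nonneg_left key2 hlm0
      nlinarith [this]
    linarith
  have hrhs : Integrable (fun x => ε * (|lp x| + |lm x|)) μ :=
    ((hlp.abs.add hlm.abs).const_mul ε)
  calc ∫ x, ((Heps ε (u' x - v x) - χp x) * (lp x * (u x - u' x))
        - (Heps ε (v x - u' x) - χm x) * (lm x * (u x - u' x))) ∂μ
      ≤ ∫ x, ε * (|lp x| + |lm x|) ∂μ :=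
        integral_mono_ae (hg1.sub hg2) hrhs hbound
    _ = ε * ((∫ x, |lp x| ∂μ) + (∫ x, |lm x| ∂μ)) := by
        rw [integral_const_mul, integral_add hlp.abs hlm.abs]
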